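/- arXiv:1505.06849 — 9 statements merged into one kernel-verified Lean document; each statement's English description precedes it below -/
import Mathlib

section
/- For a pairwise comparison matrix A of size n×n (n ≥ 3), the Perron eigenvalue λ_max of A satisfies λ_max ≥ n, with equality if and only if A is consistent (i.e., a_{ik}·a_{kj} = a_{ij} for all i,j,k). -/
/-- A pairwise comparison matrix: positive entries with the reciprocal property. -/
def IsPCM {n : ℕ} (A : Matrix (Fin n) (Fin n) ℝ) : Prop :=
  (∀ i j, 0 < A i j) ∧ (∀ i j, A j i = 1 / A i j)

/-- A PCM is consistent if `a i k * a k j = a i j` for all `i j k`. -/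
def IsConsistent {n : ℕ} (A : Matrix (Fin n) (Fin n) ℝ) : Prop :=
  ∀ i j k, A i k * A k j = A i j

/-- `lam` together with a positive eigenvector `w` forms the Perron eigenpair of `A`
(for a positive matrix, the eigenvalue admitting a positive eigenvector is exactly
the Perron (maximal) eigenvalue). -/
def IsPerronEigenpair {n : ℕ} (A : Matrix (Fin n) (Fin n) ℝ) (lam : ℝ)
    (w : Fin n → ℝ) : Prop :=
  (∀ i, 0 < w i) ∧ A.mulVec w = lam • w

/-- The simple perturbed PCM `A_δ`: the consistent PCM generated by positive weights
`x` (with `x 0 = 1`), whose entry in position (1,2) (0-based: (0,1)) is multiplied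
by `δ` and its reciprocal by `1/δ`. -/
noncomputable def simplePerturbed {n : ℕ} (x : Fin n → ℝ) (δ : ℝ) : Matrix (Fin n) (Fin n) ℝ :=
  fun i j =>
    if i.val = 0 ∧ j.val = 1 then x j * δ
    else if i.val = 1 ∧ j.val = 0 then 1 / (x i * δ)
    else x j / x i

/-- A positive weight vector `w` is efficient for `A` if no positive vector `w'`
approximates every entry at least as well, and some entry strictly better. -/
def IsEfficient {n : ℕ} (A : Matrix (Fin n) (Fin n) ℝ) (w : Fin n → ℝ) : Prop :=
  ¬ ∃ w' : Fin n → ℝ, (∀ i, 0 < w' i) ∧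
      (∀ i j, |A i j - w' i / w' j| ≤ |A i j - w i / w j|) ∧
      (∃ k l, |A k l - w' k / w' l| < |A k l - w k / w l|)


/-- Auxiliary entry `s i j = A i j * w j / w i`. -/
noncomputable def sEnt {n : ℕ} (A : Matrix (Fin n) (Fin n) ℝ) (w : Fin n → ℝ)
    (i j : Fin n) : ℝ := A i j * w j / w i

/-- For a PCM of size n ≥ 3, the Perron eigenvalue satisfies
λ_max ≥ n, with equality iff A is consistent. -/
theorem perron_eigenvalue_ge_n_iff_consistent {n : ℕ} (hn : 3 ≤ n)
    (A : Matrix (Fin n) (Fin n) ℝ) (hA : IsPCM A)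
    (lam : ℝ) (w : Fin n → ℝ) (hPerron : IsPerronEigenpair A lam w) :
    (n : ℝ) ≤ lam ∧ (lam = n ↔ IsConsistent A) := by
  obtain ⟨hpos, hrec⟩ := hA
  obtain ⟨hw, heqv⟩ := hPerron
  have heig : ∀ i, ∑ j, A i j * w j = lam * w i := by
    intro i
    have := congrFun heqv i
    simpa [Matrix.mulVec, dotProduct] using this
  have hdiag : ∀ i, A i i = 1 := by
    intro i
    have h := hrec i i
    have hp := hpos i i
    have h2 : A i i * A i i = 1 := by field_simp at h; linarith
    have h3 : (A i i - 1) * (A i i + 1) = 0 := by nlinarith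
    rcases mul_eq_zero.1 h3 with h4 | h4 <;> linarith
  have hnpos : (0:ℝ) < n := by positivity
  set s := sEnt A w with hs
  have hsdef : ∀ i j, s i j = A i j * w j / w i := fun i j => rfl
  have hspos : ∀ i j, 0 < s i j := by
    intro i j; rw [hsdef]; exact div_pos (mul_pos (hpos i j) (hw j)) (hw i)
  have hrow : ∀ i, ∑ j, s i j = lam := by
    intro i
    simp only [hsdef]
    rw [← Finset.sum_div, heig i, mul_div_assoc, div_self (hw i).ne', mul_one]
  have htotal : ∑ i, ∑ j, s i j = n * lam := by
    simp [hrow, Finset.sum_const, Finset.card_univ, mul_comm]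
  have hswap : ∑ i, ∑ j, s j i = n * lam := by
    rw [Finset.sum_comm]; exact htotal
  have hpair : ∀ i j, s i j * s j i = 1 := by
    intro i j
    rw [hsdef, hsdef, hrec i j]
    have h1 := (hpos i j).ne'
    have h2 := (hw i).ne'
    have h3 := (hw j).ne'
    field_simp
  have hge2 : ∀ i j, 2 ≤ s i j + s j i := by
    intro i j
    have h1 := hpair i j
    have h2 := hspos i j
    have h3 := hspos j i
    nlinarith [sq_nonneg (s i j - 1)]
  have hT : ∑ p : Fin n × Fin n, (s p.1 p.2 + s p.2 p.1) = 2 * (n * lam) := by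
    rw [Fintype.sum_prod_type]
    simp only [Finset.sum_add_distrib]
    rw [htotal, hswap]; ring
  have hTge : 2 * ((n:ℝ) * n) ≤ ∑ p : Fin n × Fin n, (s p.1 p.2 + s p.2 p.1) := by
    have : ∑ p : Fin n × Fin n, (2:ℝ) ≤ ∑ p : Fin n × Fin n, (s p.1 p.2 + s p.2 p.1) :=
      Finset.sum_le_sum fun p _ => hge2 p.1 p.2
    simpa [Finset.sum_const, Finset.card_univ, mul_comm, mul_assoc, mul_left_comm] using this
  have hmain : (n : ℝ) ≤ lam := by
    rw [hT] at hTge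
    nlinarith
  refine ⟨hmain, ?_, ?_⟩
  · -- lam = n → consistent
    intro hl
    have heqall : ∀ i j, s i j + s j i = 2 := by
      by_contra hc
      push_neg at hc
      obtain ⟨i, j, hij⟩ := hc
      have hlt : ∑ p : Fin n × Fin n, (2:ℝ) < ∑ p : Fin n × Fin n, (s p.1 p.2 + s p.2 p.1) :=
        Finset.sum_lt_sum (fun p _ => hge2 p.1 p.2)
          ⟨(i, j), Finset.mem_univ _, lt_of_le_of_ne (hge2 i j) (Ne.symm hij)⟩
      rw [hT, hl] at hlt
      simp only [Finset.sum_const, Finset.card_univ, Fintype.card_prod, Fintype.card_fin,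
        nsmul_eq_mul] at hlt
      push_cast at hlt
      nlinarith
    have hsone : ∀ i j, s i j = 1 := by
      intro i j
      have h1 := hpair i j
      have h2 := heqall i j
      have h3 := hspos i j
      have h4 : (s i j - 1) ^ 2 = 0 := by nlinarith
      have := pow_eq_zero_iff (n := 2) (by norm_num) |>.1 h4
      linarith [sub_eq_zero.1 this]
    have hAij : ∀ i j, A i j = w i / w j := by
      intro i j
      have h := hsone i j
      rw [hsdef] at h
      have h2 := (hw i).ne'
      have h3 := (hw j).ne'
      field_simp at h
      rw [eq_div_iff h3]; linarith
    intro i j k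
    rw [hAij i k, hAij k j, hAij i j]
    have h1 := (hw i).ne'
    have h2 := (hw j).ne'
    have h3 := (hw k).ne'
    field_simp
  · -- consistent → lam = n
    intro hc
    have hlampos : 0 < lam := lt_of_lt_of_le hnpos hmain
    have z : Fin n := ⟨0, by omega⟩
    have hwz : ∀ i, lam * w i = A i z * (lam * w z) := by
      intro i
      rw [← heig i, ← heig z, Finset.mul_sum]
      refine Finset.sum_congr rfl fun j _ => ?_
      rw [← mul_assoc, hc i j z]
    have hlast : lam * (lam * w z) = n * (lam * w z) := by
      have := hwz  -- w i = A i z * w z after cancel; combine directly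
      calc lam * (lam * w z) = lam * ∑ j, A z j * w j := by rw [heig z]
          _ = ∑ j, A z j * (lam * w j) := by
            rw [Finset.mul_sum]
            exact Finset.sum_congr rfl fun j _ => by ring
          _ = ∑ j, A z j * (A j z * (lam * w z)) := by
            refine Finset.sum_congr rfl fun j _ => by rw [hwz j]
          _ = ∑ j, (lam * w z) := by
            refine Finset.sum_congr rfl fun j _ => ?_
            rw [← mul_assoc, hc z z j, hdiag z, one_mul]
          _ = n * (lam * w z) := by
            simp [Finset.sum_const, Finset.card_univ]
    have hne : lam * w z ≠ 0 := (mul_pos hlampos (hw z)).ne'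
    exact mul_right_cancel₀ hne hlast
end

section
/- Let A_δ be the n×n simple perturbed PCM (n ≥ 3) with first row (1, x_1·δ, x_2, …, x_{n-1}) and all other entries consistent with the positive weights (1, x_1, …, x_{n-1}), except a_{21} = 1/(x_1·δ). Then λ := λ_max(A_δ) satisfies λ³ − n·λ² − (n−2)·(δ + 1/δ − 2) = 0. -/
/-- The Perron eigenvalue of the simple perturbed PCM satisfies
λ³ − nλ² − (n−2)(δ + 1/δ − 2) = 0. -/
theorem perron_eigenvalue_cubic {n : ℕ} (hn : 3 ≤ n)
    (x : Fin n → ℝ) (hx : ∀ i, 0 < x i) (hx0 : ∀ i : Fin n, i.val = 0 → x i = 1)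
    (δ : ℝ) (hδ : 0 < δ)
    (lam : ℝ) (w : Fin n → ℝ)
    (hPerron : IsPerronEigenpair (simplePerturbed x δ) lam w) :
    lam ^ 3 - n * lam ^ 2 - ((n : ℝ) - 2) * (δ + 1 / δ - 2) = 0 := by
  obtain ⟨hw, hEig⟩ := hPerron
  have hδ0 : δ ≠ 0 := hδ.ne'
  let i0 : Fin n := ⟨0, by omega⟩
  let i1 : Fin n := ⟨1, by omega⟩
  have hi0 : (i0 : Fin n).val = 0 := rfl
  have hi1 : (i1 : Fin n).val = 1 := rfl
  have hx00 : x i0 = 1 := hx0 i0 rfl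
  have hne : i0 ≠ i1 := Fin.ne_of_val_ne (show (0:ℕ) ≠ 1 by omega)
  set S := ∑ j, x j * w j with hSdef
  have hS : 0 < S := Finset.sum_pos (fun j _ => mul_pos (hx j) (hw j)) ⟨i0, Finset.mem_univ _⟩
  have hrow : ∀ i, ∑ j, simplePerturbed x δ i j * w j = lam * w i := by
    intro i
    have := congrFun hEig i
    simpa [Matrix.mulVec, dotProduct] using this
  -- rows with index ≥ 2
  have hrow2 : ∀ i : Fin n, 2 ≤ i.val → S = lam * w i * x i := by
    intro i hi
    have h1 : ∀ j, simplePerturbed x δ i j * w j * x i = x j * w j := by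
      intro j
      have h2 : ¬ (i.val = 0 ∧ j.val = 1) := by omega
      have h3 : ¬ (i.val = 1 ∧ j.val = 0) := by omega
      simp only [simplePerturbed, if_neg h2, if_neg h3]
      field_simp [(hx i).ne']
    have h4 : (∑ j, simplePerturbed x δ i j * w j) * x i = S := by
      rw [Finset.sum_mul]
      exact Finset.sum_congr rfl fun j _ => h1 j
    rw [← h4, hrow i]
  -- row 0
  have hE0 : S + (x i1 * w i1) * (δ - 1) = lam * w i0 := by
    have h1 : ∀ j, simplePerturbed x δ i0 j * w j
        = x j * w j + (if j = i1 then (x i1 * w i1) * (δ - 1) else 0) := by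
      intro j
      by_cases hj : j = i1
      · subst hj
        simp [simplePerturbed, hi0, hi1]
        ring
      · have hj1 : ¬ j.val = 1 := fun h => hj (Fin.ext h)
        simp [simplePerturbed, hi0, hi1, hj1, hj, hx00]
    have h4 : ∑ j, simplePerturbed x δ i0 j * w j = S + (x i1 * w i1) * (δ - 1) := by
      rw [Finset.sum_congr rfl fun j _ => h1 j, Finset.sum_add_distrib,
        Finset.sum_ite_eq' Finset.univ i1, if_pos (Finset.mem_univ _), ← hSdef]
    rw [← h4, hrow i0]
  -- row 1
  have hE1 : δ * S + w i0 * (1 - δ) = lam * w i1 * (x i1 * δ) := by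
    have h1 : ∀ j, simplePerturbed x δ i1 j * w j * (x i1 * δ)
        = δ * (x j * w j) + (if j = i0 then w i0 * (1 - δ) else 0) := by
      intro j
      by_cases hj : j = i0
      · subst hj
        simp [simplePerturbed, hi0, hi1, hx00]
        field_simp [(hx i1).ne']
        ring
      · have hj0 : ¬ j.val = 0 := fun h => hj (Fin.ext h)
        simp [simplePerturbed, hi0, hi1, hj0, hj]
        field_simp [(hx i1).ne']
    have h4 : ∑ j, simplePerturbed x δ i1 j * w j * (x i1 * δ)
        = δ * S + w i0 * (1 - δ) := by
      rw [Finset.sum_congr rfl fun j _ => h1 j, Finset.sum_add_distrib,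
        Finset.sum_ite_eq' Finset.univ i0, if_pos (Finset.mem_univ _), ← Finset.mul_sum,
        ← hSdef]
    rw [← h4, ← Finset.sum_mul, hrow i1]
  -- the sum equation
  have hE3 : lam * S = lam * (w i0) + lam * (x i1 * w i1) + ((n:ℝ) - 2) * S := by
    set T : Finset (Fin n) := {i0, i1} with hT
    have hcard : ((Finset.univ \ T).card : ℝ) = (n:ℝ) - 2 := by
      have hc : (Finset.univ \ T).card = n - 2 := by
        rw [Finset.card_sdiff_of_subset (Finset.subset_univ T), Finset.card_univ, Fintype.card_fin,
          Finset.card_pair hne]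
      rw [hc, Nat.cast_sub (by omega)]
      norm_num
    have hEc : ∀ j ∈ Finset.univ \ T, lam * (x j * w j) = S := by
      intro j hj
      rw [Finset.mem_sdiff, hT, Finset.mem_insert, Finset.mem_singleton] at hj
      have hj0 : j.val ≠ 0 := fun h => hj.2 (Or.inl (Fin.ext h))
      have hj1 : j.val ≠ 1 := fun h => hj.2 (Or.inr (Fin.ext h))
      have := hrow2 j (by omega)
      rw [this]; ring
    have h1 : S = (x i0 * w i0 + x i1 * w i1) + ∑ j ∈ Finset.univ \ T, x j * w j := by
      rw [hSdef, ← Finset.sum_sdiff (Finset.subset_univ T), Finset.sum_pair hne]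
      ring
    have h2 : ∑ j ∈ Finset.univ \ T, lam * (x j * w j) = ((n:ℝ) - 2) * S := by
      rw [Finset.sum_congr rfl hEc, Finset.sum_const, nsmul_eq_mul, hcard]
    calc lam * S = lam * (x i0 * w i0) + lam * (x i1 * w i1)
          + ∑ j ∈ Finset.univ \ T, lam * (x j * w j) := by
            rw [h1, mul_add, mul_add, Finset.mul_sum]
      _ = lam * (w i0) + lam * (x i1 * w i1) + ((n:ℝ) - 2) * S := by
            rw [h2, hx00]; ring
  -- final algebra
  have hkey : S * (δ * lam^3 - n * (δ * lam^2) - ((n:ℝ) - 2) * (δ^2 - 2*δ + 1)) = 0 := by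
    linear_combination (lam^2*δ + δ^2 - 2*δ + 1) * hE3 - lam*(lam*δ + 1 - δ) * hE0
      - lam*(lam + δ - 1) * hE1
  have hpoly : δ * lam^3 - n * (δ * lam^2) - ((n:ℝ) - 2) * (δ^2 - 2*δ + 1) = 0 := by
    rcases mul_eq_zero.mp hkey with h | h
    · exact absurd h hS.ne'
    · exact h
  have hfin : lam ^ 3 - n * lam ^ 2 - ((n : ℝ) - 2) * (δ + 1 / δ - 2)
      = (δ * lam^3 - n * (δ * lam^2) - ((n:ℝ) - 2) * (δ^2 - 2*δ + 1)) / δ := by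
    field_simp
    ring
  rw [hfin, hpoly, zero_div]
end

section
/- Let A_δ be the n×n simple perturbed PCM and λ its Perron eigenvalue. Then the vector w with w_1 = λ−1+δ, w_2 = (1/x_1)·(λ−1+1/δ), and w_i = (1/x_{i-1})·λ·(λ−2)/(n−2) for i = 3,…,n, is a positive eigenvector of A_δ corresponding to λ (i.e., A_δ·w = λ·w). -/
/-- The explicit vector w₁ = λ−1+δ, w₂ = (1/x₁)(λ−1+1/δ),
wᵢ = (1/x_{i-1})·λ(λ−2)/(n−2) (i ≥ 3) is a positive eigenvector of A_δ for λ. -/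
theorem explicit_perron_eigenvector {n : ℕ} (hn : 3 ≤ n)
    (x : Fin n → ℝ) (hx : ∀ i, 0 < x i) (hx0 : ∀ i : Fin n, i.val = 0 → x i = 1)
    (δ : ℝ) (hδ : 0 < δ) (hδ1 : δ ≠ 1)
    (lam : ℝ) (hlam : ∃ v, IsPerronEigenpair (simplePerturbed x δ) lam v)
    (hgt : (n : ℝ) < lam)
    (hcubic : lam ^ 3 - n * lam ^ 2 - ((n : ℝ) - 2) * (δ + 1 / δ - 2) = 0)
    (w : Fin n → ℝ)
    (hw : ∀ i : Fin n, w i =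
      if i.val = 0 then lam - 1 + δ
      else if i.val = 1 then (1 / x i) * (lam - 1 + 1 / δ)
      else (1 / x i) * lam * (lam - 2) / ((n : ℝ) - 2)) :
    IsPerronEigenpair (simplePerturbed x δ) lam w := by
  obtain ⟨m, rfl⟩ : ∃ m, n = m + 3 := ⟨n - 3, by omega⟩
  have hx0' : x 0 = 1 := hx0 0 (Fin.val_zero (m+2))
  have hv0 : ((0 : Fin (m+3)) : ℕ) = 0 := Fin.val_zero (m+2)
  have hv1 : ((1 : Fin (m+3)) : ℕ) = 1 := Fin.val_one (m+1)
  have h01 : (0 : Fin (m+3)) ≠ 1 := by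
    intro h; have := congrArg Fin.val h; rw [hv0, hv1] at this; exact absurd this (by omega)
  have hδ' : δ ≠ 0 := ne_of_gt hδ
  have hm1 : (0:ℝ) < (m:ℝ) + 1 := by positivity
  have hm1' : ((m:ℝ) + 1) ≠ 0 := ne_of_gt hm1
  have hlam3 : (3:ℝ) < lam := by
    have : (3:ℝ) ≤ ((m+3 : ℕ) : ℝ) := by push_cast; linarith [(Nat.cast_nonneg m : (0:ℝ) ≤ m)]
    linarith
  have hx1 : x 1 ≠ 0 := ne_of_gt (hx 1)
  have hncast : ((m+3 : ℕ) : ℝ) - 2 = (m:ℝ) + 1 := by push_cast; ring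
  have hcubic' : lam ^ 3 - ((m:ℝ)+3) * lam ^ 2 - ((m:ℝ) + 1) * (δ + 1 / δ - 2) = 0 := by
    push_cast at hcubic; linarith
  have hkey2 : ((m:ℝ)+1) * ((lam - 1 + δ) + (lam - 1 + 1/δ) + lam*(lam-2))
      = lam * (lam * (lam - 2)) := by
    linear_combination -hcubic'
  -- entry values
  have hA00 : simplePerturbed x δ 0 0 = 1 := by
    simp only [simplePerturbed, hv0, hv1]
    norm_num [hx0']
  have hA01 : simplePerturbed x δ 0 1 = x 1 * δ := by
    simp only [simplePerturbed, hv0, hv1]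
    norm_num
  have hA10 : simplePerturbed x δ 1 0 = 1 / (x 1 * δ) := by
    simp only [simplePerturbed, hv0, hv1]
    norm_num
  have hA11 : simplePerturbed x δ 1 1 = 1 := by
    simp only [simplePerturbed, hv0, hv1]
    norm_num [div_self hx1]
  -- values of w
  have hw0 : w 0 = lam - 1 + δ := by rw [hw 0, hv0]; norm_num
  have hw1 : w 1 = 1 / x 1 * (lam - 1 + 1/δ) := by rw [hw 1, hv1]; norm_num
  have hwgen : ∀ j : Fin (m+3), (j:ℕ) ≠ 0 → (j:ℕ) ≠ 1 →
      w j = 1 / x j * lam * (lam - 2) / ((m:ℝ) + 1) := by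
    intro j hj0 hj1
    rw [hw j, if_neg hj0, if_neg hj1, hncast]
  have hsplit : ∀ f : Fin (m+3) → ℝ,
      ∑ j, f j = f 0 + f 1 + ∑ j ∈ Finset.univ \ {0, 1}, f j := by
    intro f
    rw [← Finset.sum_sdiff (Finset.subset_univ ({0,1} : Finset (Fin (m+3)))),
      Finset.sum_pair h01]
    ring
  have hcard : (Finset.univ \ ({0,1} : Finset (Fin (m+3)))).card = m + 1 := by
    rw [Finset.card_sdiff_of_subset (Finset.subset_univ _), Finset.card_univ, Fintype.card_fin,
      Finset.card_pair h01]
    omega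
  constructor
  · intro i
    rw [hw i]
    have hxi := hx i
    split_ifs with h0 h1
    · linarith
    · have h1δ : 0 < 1/δ := by positivity
      have : 0 < lam - 1 + 1/δ := by linarith
      positivity
    · have h2 : (0:ℝ) < lam - 2 := by linarith
      rw [hncast]
      have hnum : 0 < 1 / x i * lam * (lam - 2) :=
        mul_pos (mul_pos (by positivity) (by linarith)) h2
      exact div_pos hnum hm1
  · funext i
    simp only [Matrix.mulVec, dotProduct, Pi.smul_apply, smul_eq_mul]
    rw [hsplit]
    have hrest : ∑ j ∈ Finset.univ \ ({0,1} : Finset (Fin (m+3))),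
        simplePerturbed x δ i j * w j
        = 1 / x i * (lam * (lam - 2)) := by
      have hconst : ∀ j ∈ Finset.univ \ ({0,1} : Finset (Fin (m+3))),
          simplePerturbed x δ i j * w j
          = 1 / x i * (lam * (lam - 2)) / ((m:ℝ) + 1) := by
        intro j hj
        simp only [Finset.mem_sdiff, Finset.mem_insert, Finset.mem_singleton,
          not_or] at hj
        have hj0 : (j:ℕ) ≠ 0 := fun (h : (j:ℕ) = 0) => hj.2.1 (Fin.val_injective (h.trans hv0.symm))
        have hj1 : (j:ℕ) ≠ 1 := fun (h : (j:ℕ) = 1) => hj.2.2 (Fin.val_injective (h.trans hv1.symm))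
        have hxj : x j ≠ 0 := ne_of_gt (hx j)
        have hxi : x i ≠ 0 := ne_of_gt (hx i)
        have hAij : simplePerturbed x δ i j = x j / x i := by
          simp only [simplePerturbed,
            if_neg (fun h : (i:ℕ) = 0 ∧ (j:ℕ) = 1 => hj1 h.2),
            if_neg (fun h : (i:ℕ) = 1 ∧ (j:ℕ) = 0 => hj0 h.2)]
        rw [hAij, hwgen j hj0 hj1]
        field_simp
      rw [Finset.sum_congr rfl hconst, Finset.sum_const, hcard, nsmul_eq_mul]
      push_cast
      have hxi' : x i ≠ 0 := ne_of_gt (hx i)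
      rw [mul_comm, div_mul_cancel₀ _ hm1']
    rw [hrest, hw i]
    rcases Nat.lt_or_ge i.val 2 with hi | hi
    · rcases Nat.lt_or_ge i.val 1 with hi0 | hi1
      · have hie : i = 0 := Fin.val_injective (by rw [hv0]; omega)
        subst hie
        rw [hA00, hA01, hw0, hw1, hx0', hv0, if_pos rfl]
        field_simp
        ring
      · have hie : i = 1 := Fin.val_injective (by rw [hv1]; omega)
        subst hie
        rw [hA10, hA11, hw0, hw1, hv1, if_neg (by norm_num : ¬(1 = 0)),
          if_pos rfl]
        field_simp
        ring
    · have hi0 : (i:ℕ) ≠ 0 := by omega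
      have hi1 : (i:ℕ) ≠ 1 := by omega
      have hxi : x i ≠ 0 := ne_of_gt (hx i)
      have hAi0 : simplePerturbed x δ i 0 = 1 / x i := by
        simp only [simplePerturbed, hv0, hv1]
        rw [if_neg (by simp [hi0]), if_neg (by simp [hi1]), hx0']
      have hAi1 : simplePerturbed x δ i 1 = x 1 / x i := by
        simp only [simplePerturbed, hv0, hv1]
        rw [if_neg (by simp [hi0]), if_neg (by simp [hi1])]
      have hkey3 : (lam - 1 + δ) + (lam - 1 + 1/δ) + lam*(lam-2)
          = lam * (lam * (lam - 2) / ((m:ℝ)+1)) := by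
        rw [mul_div_assoc', eq_div_iff hm1']
        linear_combination hkey2
      have hterm : x 1 / x i * (1 / x 1 * (lam - 1 + 1/δ))
          = 1 / x i * (lam - 1 + 1/δ) := by
        field_simp
      rw [hAi0, hAi1, hw0, hw1, if_neg hi0, if_neg hi1, hncast, hterm]
      linear_combination (x i)⁻¹ * hkey3
end

section
/- Let A_δ be the n×n simple perturbed PCM and λ its Perron eigenvalue. Then the vector w' with w'_1 = λ·(λ−n+1), w'_2 = (1/x_1)·[λ − (1 − 1/δ)·(λ−n+2)], and w'_i = (1/x_{i-1})·(λ−1+1/δ) for i = 3,…,n, is also an eigenvector of A_δ for λ; moreover w' = c·w where w is the eigenvector with w_1 = λ−1+δ, w_2 = (1/x_1)(λ−1+1/δ), w_i = (1/x_{i-1})·λ(λ−2)/(n−2), and c = λ(λ−n+1)/(λ−1+δ). -/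
lemma pcm_aux_row0 (n lam δ x1 : ℝ) (hδ0 : δ ≠ 0) (hx1 : x1 ≠ 0)
    (hc : lam ^ 3 * δ - n * lam ^ 2 * δ - (n - 2) * (δ ^ 2 + 1 - 2 * δ) = 0) :
    (1:ℝ) / 1 * (lam * (lam - n + 1)) + x1 * δ * (1 / x1 * (lam - (1 - 1 / δ) * (lam - n + 2)))
      + (n - 2) * ((lam - 1 + 1/δ) / 1) = lam * (lam * (lam - n + 1)) := by
  field_simp
  linear_combination -hc

lemma pcm_aux_row1 (n lam δ x1 : ℝ) (hδ0 : δ ≠ 0) (hx1 : x1 ≠ 0) :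
    1 / (x1 * δ) * (lam * (lam - n + 1)) + x1 / x1 * (1 / x1 * (lam - (1 - 1 / δ) * (lam - n + 2)))
      + (n - 2) * ((lam - 1 + 1/δ) / x1) = lam * (1 / x1 * (lam - (1 - 1 / δ) * (lam - n + 2))) := by
  field_simp
  ring

lemma pcm_aux_rowi (n lam δ x1 xi : ℝ) (hδ0 : δ ≠ 0) (hx1 : x1 ≠ 0) (hxi : xi ≠ 0) :
    1 / xi * (lam * (lam - n + 1)) + x1 / xi * (1 / x1 * (lam - (1 - 1 / δ) * (lam - n + 2)))
      + (n - 2) * ((lam - 1 + 1/δ) / xi) = lam * (1 / xi * (lam - 1 + 1/δ)) := by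
  field_simp
  ring

lemma pcm_aux_prop1 (n lam δ x1 : ℝ) (hδ0 : δ ≠ 0) (hx1 : x1 ≠ 0) (hden : lam - 1 + δ ≠ 0)
    (hc : lam ^ 3 * δ - n * lam ^ 2 * δ - (n - 2) * (δ ^ 2 + 1 - 2 * δ) = 0) :
    1 / x1 * (lam - (1 - 1 / δ) * (lam - n + 2)) =
      lam * (lam - n + 1) / (lam - 1 + δ) * (1 / x1 * (lam - 1 + 1 / δ)) := by
  field_simp
  linear_combination -hc

lemma pcm_aux_propi (n lam δ xi : ℝ) (hδ0 : δ ≠ 0) (hxi : xi ≠ 0) (hden : lam - 1 + δ ≠ 0)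
    (hn2 : n - 2 ≠ 0)
    (hc : lam ^ 3 * δ - n * lam ^ 2 * δ - (n - 2) * (δ ^ 2 + 1 - 2 * δ) = 0) :
    1 / xi * (lam - 1 + 1 / δ) =
      lam * (lam - n + 1) / (lam - 1 + δ) * (1 / xi * lam * (lam - 2) / (n - 2)) := by
  field_simp
  linear_combination (1 - lam) * hc

/-- The alternative explicit vector w'₁ = λ(λ−n+1),
w'₂ = (1/x₁)[λ − (1−1/δ)(λ−n+2)], w'ᵢ = (1/x_{i-1})(λ−1+1/δ) (i ≥ 3) is also an
eigenvector of A_δ for λ, and w' = c·w with c = λ(λ−n+1)/(λ−1+δ). -/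
theorem alternative_perron_eigenvector {n : ℕ} (hn : 3 ≤ n)
    (x : Fin n → ℝ) (hx : ∀ i, 0 < x i) (hx0 : ∀ i : Fin n, i.val = 0 → x i = 1)
    (δ : ℝ) (hδ : 0 < δ) (hδ1 : δ ≠ 1)
    (lam : ℝ) (hlam : ∃ v, IsPerronEigenpair (simplePerturbed x δ) lam v)
    (hgt : (n : ℝ) < lam)
    (hcubic : lam ^ 3 - n * lam ^ 2 - ((n : ℝ) - 2) * (δ + 1 / δ - 2) = 0)
    (w w' : Fin n → ℝ)
    (hw : ∀ i : Fin n, w i =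
      if i.val = 0 then lam - 1 + δ
      else if i.val = 1 then (1 / x i) * (lam - 1 + 1 / δ)
      else (1 / x i) * lam * (lam - 2) / ((n : ℝ) - 2))
    (hw' : ∀ i : Fin n, w' i =
      if i.val = 0 then lam * (lam - n + 1)
      else if i.val = 1 then (1 / x i) * (lam - (1 - 1 / δ) * (lam - n + 2))
      else (1 / x i) * (lam - 1 + 1 / δ)) :
    (simplePerturbed x δ).mulVec w' = lam • w' ∧
    w' = fun i => (lam * (lam - n + 1) / (lam - 1 + δ)) * w i := by
  have h0n : 0 < n := by omega
  have h1n : 1 < n := by omega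
  have h2n : 2 ≤ n := by omega
  set i0 : Fin n := ⟨0, h0n⟩ with hi0def
  set i1 : Fin n := ⟨1, h1n⟩ with hi1def
  have hx00 : x i0 = 1 := hx0 i0 rfl
  have hδ0 : δ ≠ 0 := ne_of_gt hδ
  have hxne : ∀ i : Fin n, x i ≠ 0 := fun i => ne_of_gt (hx i)
  have hn3 : (3:ℝ) ≤ (n:ℝ) := by exact_mod_cast hn
  have hlam3 : (3:ℝ) < lam := lt_of_le_of_lt hn3 hgt
  have hden : lam - 1 + δ ≠ 0 := by nlinarith
  have hc : lam ^ 3 * δ - (n:ℝ) * lam ^ 2 * δ - ((n:ℝ) - 2) * (δ ^ 2 + 1 - 2 * δ) = 0 := by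
    have h := hcubic
    field_simp at h
    linear_combination h
  -- entries of w'
  have hw'0 : w' i0 = lam * (lam - n + 1) := by rw [hw' i0]; simp [hi0def]
  have hw'1 : w' i1 = (1 / x i1) * (lam - (1 - 1 / δ) * (lam - n + 2)) := by
    rw [hw' i1]; simp [hi1def]
  -- sum decomposition
  have key : ∀ i : Fin n, (simplePerturbed x δ).mulVec w' i =
      simplePerturbed x δ i i0 * w' i0 + simplePerturbed x δ i i1 * w' i1
        + ((n:ℝ) - 2) * ((lam - 1 + 1/δ) / x i) := by
    intro i
    have hne01 : i1 ≠ i0 := by simp [hi0def, hi1def, Fin.ext_iff]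
    have hmem1 : i1 ∈ Finset.univ.erase i0 :=
      Finset.mem_erase.2 ⟨hne01, Finset.mem_univ _⟩
    have hsum : (simplePerturbed x δ).mulVec w' i
        = ∑ j : Fin n, simplePerturbed x δ i j * w' j := rfl
    rw [hsum, ← Finset.add_sum_erase _ _ (Finset.mem_univ i0),
      ← Finset.add_sum_erase _ _ hmem1]
    have hconst : ∀ j ∈ (Finset.univ.erase i0).erase i1,
        simplePerturbed x δ i j * w' j = (lam - 1 + 1/δ) / x i := by
      intro j hj
      have hj1 : j ≠ i1 := (Finset.mem_erase.1 hj).1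
      have hj0 : j ≠ i0 := (Finset.mem_erase.1 (Finset.mem_erase.1 hj).2).1
      have hjv0 : j.val ≠ 0 := fun h => hj0 (Fin.ext h)
      have hjv1 : j.val ≠ 1 := fun h => hj1 (Fin.ext h)
      rw [hw' j, if_neg hjv0, if_neg hjv1]
      have hA : simplePerturbed x δ i j = x j / x i := by
        simp [simplePerturbed, hjv0, hjv1]
      rw [hA]
      field_simp [hxne j, hxne i]
    rw [Finset.sum_congr rfl hconst, Finset.sum_const, nsmul_eq_mul]
    have hcard : ((Finset.univ.erase i0).erase i1).card = n - 2 := by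
      rw [Finset.card_erase_of_mem hmem1, Finset.card_erase_of_mem (Finset.mem_univ _)]
      rw [Finset.card_univ, Fintype.card_fin]
      omega
    rw [hcard]
    have : ((n - 2 : ℕ) : ℝ) = (n:ℝ) - 2 := by
      push_cast [Nat.cast_sub h2n]; ring
    rw [this]
    ring
  constructor
  · funext i
    rw [key i, Pi.smul_apply, smul_eq_mul]
    by_cases h0 : i.val = 0
    · have hi : i = i0 := Fin.ext h0
      subst hi
      have hA0 : simplePerturbed x δ i0 i0 = x i0 / x i0 := by
        simp [simplePerturbed]
      have hA1 : simplePerturbed x δ i0 i1 = x i1 * δ := by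
        simp [simplePerturbed, hi0def, hi1def]
      rw [hA0, hA1, hw'0, hw'1, hx00]
      exact pcm_aux_row0 n lam δ (x i1) hδ0 (hxne i1) hc
    · by_cases h1 : i.val = 1
      · have hi : i = i1 := Fin.ext h1
        subst hi
        have hA0 : simplePerturbed x δ i1 i0 = 1 / (x i1 * δ) := by
          simp [simplePerturbed, hi0def, hi1def]
        have hA1 : simplePerturbed x δ i1 i1 = x i1 / x i1 := by
          simp [simplePerturbed]
        rw [hA0, hA1, hw'0, hw'1]
        exact pcm_aux_row1 n lam δ (x i1) hδ0 (hxne i1)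
      · have hA0 : simplePerturbed x δ i i0 = x i0 / x i := by
          simp [simplePerturbed, h0, h1]
        have hA1 : simplePerturbed x δ i i1 = x i1 / x i := by
          simp [simplePerturbed, h0, h1]
        rw [hA0, hA1, hw'0, hw'1, hw' i, if_neg h0, if_neg h1, hx00]
        exact pcm_aux_rowi n lam δ (x i1) (x i) hδ0 (hxne i1) (hxne i)
  · funext i
    by_cases h0 : i.val = 0
    · rw [hw' i, hw i, if_pos h0, if_pos h0]
      field_simp [hden]
    · by_cases h1 : i.val = 1
      · rw [hw' i, hw i, if_neg h0, if_neg h0, if_pos h1, if_pos h1]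
        field_simp [hxne i, hδ0, hden]
        linear_combination -hc
      · rw [hw' i, hw i, if_neg h0, if_neg h0, if_neg h1, if_neg h1]
        have hn2 : (n:ℝ) - 2 ≠ 0 := by nlinarith
        exact pcm_aux_propi n lam δ (x i) hδ0 (hxne i) hden hn2 hc
end

section
/- For the simple perturbed PCM A_δ with Perron eigenvector w given by w_1 = λ−1+δ, w_2 = (1/x_1)(λ−1+1/δ), it holds that: if δ > 1 then w_1/w_2 < a_{12} = x_1·δ, and if δ < 1 then w_1/w_2 > a_{12}. -/
/-- Lemma 3.1: with w₁ = λ−1+δ, w₂ = (1/x₁)(λ−1+1/δ),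
if δ > 1 then w₁/w₂ < a₁₂ = x₁δ, and if δ < 1 then w₁/w₂ > a₁₂. -/
theorem ratio_w1_w2_vs_a12 {n : ℕ} (hn : 3 ≤ n)
    (x : Fin n → ℝ) (hx : ∀ i, 0 < x i) (hx0 : ∀ i : Fin n, i.val = 0 → x i = 1)
    (δ : ℝ) (hδ : 0 < δ) (hδ1 : δ ≠ 1)
    (lam : ℝ) (hlam : ∃ v, IsPerronEigenpair (simplePerturbed x δ) lam v)
    (hgt : (n : ℝ) < lam) :
    (1 < δ →
      (lam - 1 + δ) / ((1 / x ⟨1, by omega⟩) * (lam - 1 + 1 / δ)) <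
        x ⟨1, by omega⟩ * δ) ∧
    (δ < 1 →
      (lam - 1 + δ) / ((1 / x ⟨1, by omega⟩) * (lam - 1 + 1 / δ)) >
        x ⟨1, by omega⟩ * δ) := by
  set x1 := x ⟨1, by omega⟩ with hx1def
  have hx1 : 0 < x1 := hx _
  have hlam2 : (2 : ℝ) < lam := by
    have : (3 : ℝ) ≤ (n : ℝ) := by exact_mod_cast hn
    linarith
  have hδinv : 0 < 1 / δ := by positivity
  have hden : 0 < (1 / x1) * (lam - 1 + 1 / δ) := by
    apply mul_pos (by positivity); linarith
  constructor
  · intro h1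
    rw [div_lt_iff₀ hden]
    have key : lam - 1 + δ < δ * (lam - 1 + 1 / δ) := by
      have : δ * (1 / δ) = 1 := mul_one_div_cancel (ne_of_gt hδ)
      nlinarith
    calc lam - 1 + δ < δ * (lam - 1 + 1 / δ) := key
      _ = x1 * δ * ((1 / x1) * (lam - 1 + 1 / δ)) := by
          field_simp
  · intro h1
    rw [gt_iff_lt, lt_div_iff₀ hden]
    have key : δ * (lam - 1 + 1 / δ) < lam - 1 + δ := by
      have : δ * (1 / δ) = 1 := mul_one_div_cancel (ne_of_gt hδ)
      nlinarith
    calc x1 * δ * ((1 / x1) * (lam - 1 + 1 / δ))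
        = δ * (lam - 1 + 1 / δ) := by field_simp
      _ < lam - 1 + δ := key
end

section
/- Let A_δ be the simple perturbed PCM with Perron eigenvalue λ and Perron eigenvector w (with w_1 = λ(λ−n+1) and w_j = (1/x_{j-1})(λ−1+1/δ) for j ≥ 3, up to scaling). For every j ∈ {3,…,n}: if δ > 1 then w_1/w_j > a_{1j} = x_{j-1}, and if δ < 1 then w_1/w_j < a_{1j}. -/
lemma aux_sign (nr lam δ : ℝ) (hδ : 0 < δ) (h3 : 3 ≤ nr) (hgt : nr < lam)
    (hid' : (lam - nr + 1) * (δ * lam ^ 2 + (δ - 1) ^ 2)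
      = (lam + δ - 1) * (δ * lam - δ + 1)) :
    (1 < δ → 0 < lam * (lam - nr + 1) - (lam - 1 + 1 / δ)) ∧
    (δ < 1 → lam * (lam - nr + 1) - (lam - 1 + 1 / δ) < 0) := by
  have hδ0 : δ ≠ 0 := hδ.ne'
  have hQ : 0 < lam + δ - 1 := by linarith
  have hln : 0 < lam - nr + 1 := by linarith
  have hP' : 0 < δ * lam - δ + 1 := by nlinarith
  have hinv : δ * (lam - 1 + 1 / δ) = δ * lam - δ + 1 := by field_simp
  have hK : δ * (lam + δ - 1) * (lam * (lam - nr + 1) - (lam - 1 + 1 / δ))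
      = (lam - nr + 1) * (δ - 1) * (δ * lam - δ + 1) := by
    linear_combination (-(lam + δ - 1)) * hinv + hid'
  constructor
  · intro h1δ
    have h5 : 0 < δ * (lam + δ - 1) * (lam * (lam - nr + 1) - (lam - 1 + 1 / δ)) := by
      rw [hK]
      exact mul_pos (mul_pos hln (by linarith)) hP'
    nlinarith [mul_pos hδ hQ]
  · intro h1δ
    have h5 : δ * (lam + δ - 1) * (lam * (lam - nr + 1) - (lam - 1 + 1 / δ)) < 0 := by
      rw [hK]
      have h6 : δ - 1 < 0 := by linarith
      nlinarith [mul_pos (mul_pos (by linarith : (0:ℝ) < 1 - δ) hln) hP']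
    nlinarith [mul_pos hδ hQ]

/-- Lemma 3.2: with w₁ = λ(λ−n+1) and w_j = (1/x_{j-1})(λ−1+1/δ)
for j ≥ 3 (up to scaling), for every j ≥ 3: if δ > 1 then w₁/w_j > a₁ⱼ = x_{j-1},
and if δ < 1 then w₁/w_j < a₁ⱼ. -/
theorem ratio_w1_wj_vs_a1j {n : ℕ} (hn : 3 ≤ n)
    (x : Fin n → ℝ) (hx : ∀ i, 0 < x i) (hx0 : ∀ i : Fin n, i.val = 0 → x i = 1)
    (δ : ℝ) (hδ : 0 < δ) (hδ1 : δ ≠ 1)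
    (lam : ℝ) (hlam : ∃ v, IsPerronEigenpair (simplePerturbed x δ) lam v)
    (hgt : (n : ℝ) < lam) :
    ∀ j : Fin n, 2 ≤ j.val →
      (1 < δ →
        (lam * (lam - n + 1)) / ((1 / x j) * (lam - 1 + 1 / δ)) > x j) ∧
      (δ < 1 →
        (lam * (lam - n + 1)) / ((1 / x j) * (lam - 1 + 1 / δ)) < x j) := by
  obtain ⟨v, hv, heig⟩ := hlam
  have hn' : (3:ℝ) ≤ (n:ℝ) := by exact_mod_cast hn
  have hlam3 : (3:ℝ) < lam := lt_of_le_of_lt hn' hgt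
  have hlam0 : (0:ℝ) < lam := by linarith
  set i0 : Fin n := ⟨0, by omega⟩ with hi0
  set i1 : Fin n := ⟨1, by omega⟩ with hi1
  have hval0 : i0.val = 0 := rfl
  have hval1 : i1.val = 1 := rfl
  have hx1ne : x i1 ≠ 0 := (hx i1).ne'
  have hδ0 : δ ≠ 0 := hδ.ne'
  have hx00 : x i0 = 1 := hx0 i0 rfl
  set S : ℝ := ∑ j, x j * v j with hSdef
  have hS : 0 < S := Finset.sum_pos (fun j _ => mul_pos (hx j) (hv j)) ⟨i0, Finset.mem_univ _⟩
  have heq : ∀ i, ∑ j, simplePerturbed x δ i j * v j = lam * v i := by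
    intro i
    have := congrFun heig i
    simpa [Matrix.mulVec, dotProduct, Pi.smul_apply, smul_eq_mul] using this
  -- rows ≥ 2
  have hrow2 : ∀ i : Fin n, 2 ≤ i.val → lam * v i = S / x i := by
    intro i hi
    have hAi : ∀ j, simplePerturbed x δ i j = x j / x i := by
      intro j
      unfold simplePerturbed
      rw [if_neg (by omega), if_neg (by omega)]
    rw [← heq i]
    rw [Finset.sum_congr rfl fun j _ => by rw [hAi j]]
    rw [Finset.sum_div]
    exact Finset.sum_congr rfl fun j _ => by ring
  have hv2 : ∀ i : Fin n, 2 ≤ i.val → x i * v i = S / lam := by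
    intro i hi
    have h := hrow2 i hi
    have hxi := (hx i).ne'
    field_simp at h ⊢
    linarith [h]
  -- row 0
  have hrow0 : S + (δ - 1) * (x i1 * v i1) = lam * v i0 := by
    rw [← heq i0]
    have hA0 : ∀ j : Fin n, simplePerturbed x δ i0 j = if j = i1 then x j * δ else x j := by
      intro j
      unfold simplePerturbed
      by_cases hj : j = i1
      · subst hj; rw [if_pos ⟨rfl, rfl⟩, if_pos rfl]
      · have hj1 : j.val ≠ 1 := fun h => hj (Fin.ext h)
        rw [if_neg (by tauto), if_neg (by omega), if_neg hj, hx00, div_one]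
    rw [Finset.sum_congr rfl fun j _ => by rw [hA0 j]]
    have : ∀ j : Fin n, (if j = i1 then x j * δ else x j) * v j
        = x j * v j + (if j = i1 then (δ - 1) * (x i1 * v i1) else 0) := by
      intro j
      by_cases hj : j = i1
      · subst hj; simp; ring
      · simp [hj]
    rw [Finset.sum_congr rfl fun j _ => this j, Finset.sum_add_distrib]
    simp [hSdef]
  -- row 1
  have hrow1 : (1 - δ) * v i0 + δ * S = δ * lam * (x i1 * v i1) := by
    have h1 := heq i1
    have hA1 : ∀ j : Fin n, simplePerturbed x δ i1 j
        = if j = i0 then 1 / (x i1 * δ) else x j / x i1 := by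
      intro j
      unfold simplePerturbed
      by_cases hj : j = i0
      · subst hj; rw [if_neg (by omega), if_pos ⟨rfl, rfl⟩, if_pos rfl]
      · have hj0 : j.val ≠ 0 := fun h => hj (Fin.ext h)
        rw [if_neg (by omega), if_neg (by tauto), if_neg hj]
    rw [Finset.sum_congr rfl fun j _ => by rw [hA1 j]] at h1
    have hsplit : ∀ j : Fin n, (if j = i0 then 1 / (x i1 * δ) else x j / x i1) * v j
        = (x j * v j) / x i1 + (if j = i0 then (1 / (x i1 * δ) - 1 / x i1) * v i0 else 0) := by
      intro j
      by_cases hj : j = i0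
      · subst hj
        rw [if_pos rfl, if_pos rfl, hx00]
        ring
      · simp [hj]; ring
    rw [Finset.sum_congr rfl fun j _ => hsplit j, Finset.sum_add_distrib] at h1
    rw [← Finset.sum_div] at h1
    simp only [Finset.sum_ite_eq' Finset.univ i0, Finset.mem_univ, if_pos] at h1
    -- h1 : S / x i1 + (1/(x i1 * δ) - 1/ x i1) * v i0 = lam * v i1
    have hx1 := (hx i1).ne'
    field_simp at h1
    rw [← hSdef] at h1
    refine mul_left_cancel₀ (mul_ne_zero hx1 hx1) ?_
    linear_combination (x i1 * x i1) * h1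
  -- the sum split
  have hcard : ((Finset.univ.filter fun j : Fin n => 2 ≤ j.val).card : ℝ) = (n:ℝ) - 2 := by
    have h2 : (Finset.univ.filter fun j : Fin n => ¬ 2 ≤ j.val) = {i0, i1} := by
      ext j
      simp only [Finset.mem_filter, Finset.mem_univ, true_and, Finset.mem_insert,
        Finset.mem_singleton, not_le]
      constructor
      · intro h
        have h' : j.val = 0 ∨ j.val = 1 := by omega
        rcases h' with h' | h'
        · left; exact Fin.ext h'
        · right; exact Fin.ext h'
      · rintro (rfl | rfl) <;> omega
    have hne : i0 ≠ i1 := by simp [Fin.ext_iff]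
    have h3 := Finset.card_filter_add_card_filter_not
      (s := (Finset.univ : Finset (Fin n))) (p := fun j : Fin n => 2 ≤ j.val)
    simp only [h2, Finset.card_insert_of_notMem (by simp [hne] : i0 ∉ ({i1} : Finset (Fin n))),
      Finset.card_singleton, Finset.card_univ, Fintype.card_fin] at h3
    have : (Finset.univ.filter fun j : Fin n => 2 ≤ j.val).card = n - 2 := by omega
    rw [this]
    have : ((n - 2 : ℕ) : ℝ) = (n:ℝ) - 2 := by
      have : 2 ≤ n := by omega
      push_cast [Nat.cast_sub this]; ring
    rw [this]
  have hsum : lam * S = lam * v i0 + lam * (x i1 * v i1) + ((n:ℝ) - 2) * S := by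
    have hsplit : Finset.univ = insert i0 (insert i1
        (Finset.univ.filter fun j : Fin n => 2 ≤ j.val)) := by
      ext j
      simp only [Finset.mem_univ, Finset.mem_insert, Finset.mem_filter, true_and, true_iff]
      by_cases h0 : j = i0
      · tauto
      by_cases h1 : j = i1
      · tauto
      right; right
      have : j.val ≠ 0 := fun h => h0 (Fin.ext h)
      have : j.val ≠ 1 := fun h => h1 (Fin.ext h)
      omega
    have hmem1 : i1 ∉ (Finset.univ.filter fun j : Fin n => 2 ≤ j.val) := by simp [hval1]
    have hmem0 : i0 ∉ insert i1 (Finset.univ.filter fun j : Fin n => 2 ≤ j.val) := by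
      simp [Fin.ext_iff, hval0]
    have hSsplit : S = x i0 * v i0 + x i1 * v i1
        + ∑ j ∈ (Finset.univ.filter fun j : Fin n => 2 ≤ j.val), x j * v j := by
      rw [hSdef]
      conv_lhs => rw [hsplit]
      rw [Finset.sum_insert hmem0, Finset.sum_insert hmem1]
      ring
    have htail : ∑ j ∈ (Finset.univ.filter fun j : Fin n => 2 ≤ j.val), x j * v j
        = ((n:ℝ) - 2) * (S / lam) := by
      rw [Finset.sum_congr rfl fun j hj => hv2 j (Finset.mem_filter.mp hj).2]
      rw [Finset.sum_const, nsmul_eq_mul, hcard]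
    rw [htail, hx00, one_mul] at hSsplit
    have : lam * S = lam * (v i0 + x i1 * v i1 + ((n:ℝ)-2) * (S/lam)) := by
      rw [← hSsplit]
    rw [this]
    field_simp
  -- algebra
  set a := v i0
  set b := x i1 * v i1
  have hb : 0 < b := mul_pos (hx i1) (hv i1)
  have E1 : b * (lam + δ - 1) = S * (lam - n + 1) := by
    linear_combination hrow0 - hsum
  have E2 : S * (δ * lam - δ + 1) = b * (δ * lam ^ 2 + (δ - 1) ^ 2) := by
    linear_combination lam * hrow1 + (1 - δ) * hrow0
  have hid : S * ((lam - n + 1) * (δ * lam ^ 2 + (δ - 1) ^ 2)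
      - (lam + δ - 1) * (δ * lam - δ + 1)) = 0 := by
    linear_combination (-(δ * lam ^ 2 + (δ - 1) ^ 2)) * E1 - (lam + δ - 1) * E2
  have hid' : (lam - n + 1) * (δ * lam ^ 2 + (δ - 1) ^ 2)
      = (lam + δ - 1) * (δ * lam - δ + 1) := by
    rcases mul_eq_zero.mp hid with h | h
    · exact absurd h hS.ne'
    · linarith
  have haux := aux_sign (n:ℝ) lam δ hδ hn' hgt hid'
  intro j hj
  have hxj := hx j
  have h7 : 0 < (1:ℝ) / δ := by positivity
  have h6 : 0 < lam - 1 + 1 / δ := by linarith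
  have hPpos : 0 < (1 / x j) * (lam - 1 + 1 / δ) := by positivity
  have hcanc : x j * ((1 / x j) * (lam - 1 + 1 / δ)) = lam - 1 + 1 / δ := by
    field_simp
  constructor
  · intro h1δ
    have hKpos := haux.1 h1δ
    rw [gt_iff_lt, lt_div_iff₀ hPpos, hcanc]
    linarith
  · intro h1δ
    have hKneg := haux.2 h1δ
    rw [div_lt_iff₀ hPpos, hcanc]
    linarith
end

section
/- Let A_δ be the simple perturbed PCM with δ > 1 and w its Perron eigenvector. The digraph G with vertex set {1,…,n} and arcs i → j iff i ≠ j and w_i/w_j ≥ a_{ij} has the following arc structure: 2 → 1 but not 1 → 2; 1 → j but not j → 1 for all j ≥ 3; j → 2 but not 2 → j for all j ≥ 3; and both i → j and j → i for all distinct i, j ≥ 3. This digraph is strongly connected. -/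
lemma sp_01 {n : ℕ} (x : Fin n → ℝ) (δ : ℝ) (i j : Fin n) (hi : i.val = 0) (hj : j.val = 1) :
    simplePerturbed x δ i j = x j * δ := by
  simp [simplePerturbed, hi, hj]

lemma sp_10 {n : ℕ} (x : Fin n → ℝ) (δ : ℝ) (i j : Fin n) (hi : i.val = 1) (hj : j.val = 0) :
    simplePerturbed x δ i j = 1 / (x i * δ) := by
  simp [simplePerturbed, hi, hj]

lemma sp_gen {n : ℕ} (x : Fin n → ℝ) (δ : ℝ) (i j : Fin n)
    (h1 : ¬(i.val = 0 ∧ j.val = 1)) (h2 : ¬(i.val = 1 ∧ j.val = 0)) :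
    simplePerturbed x δ i j = x j / x i := by
  simp only [simplePerturbed, if_neg h1, if_neg h2]


set_option maxHeartbeats 1000000 in
/-- arc structure of the digraph of a simple perturbed PCM (δ > 1)
with its Perron eigenvector, and its strong connectivity. -/
theorem digraph_structure_simple_perturbed {n : ℕ} (hn : 3 ≤ n)
    (x : Fin n → ℝ) (hx : ∀ i, 0 < x i) (hx0 : ∀ i : Fin n, i.val = 0 → x i = 1)
    (δ : ℝ) (hδ : 1 < δ)
    (lam : ℝ) (w : Fin n → ℝ)
    (hPerron : IsPerronEigenpair (simplePerturbed x δ) lam w)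
    (E : Fin n → Fin n → Prop)
    (hE : ∀ i j : Fin n, E i j ↔ (i ≠ j ∧ simplePerturbed x δ i j ≤ w i / w j)) :
    (∀ i j : Fin n, i.val = 1 → j.val = 0 → E i j ∧ ¬ E j i) ∧
    (∀ i j : Fin n, i.val = 0 → 2 ≤ j.val → E i j ∧ ¬ E j i) ∧
    (∀ i j : Fin n, 2 ≤ i.val → j.val = 1 → E i j ∧ ¬ E j i) ∧
    (∀ i j : Fin n, 2 ≤ i.val → 2 ≤ j.val → i ≠ j → E i j ∧ E j i) ∧
    (∀ u v : Fin n, u ≠ v → Relation.TransGen E u v) := by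
  obtain ⟨hw, heig⟩ := hPerron
  obtain ⟨i0, hi0⟩ : ∃ k : Fin n, k.val = 0 := ⟨⟨0, by omega⟩, rfl⟩
  obtain ⟨i1, hi1⟩ : ∃ k : Fin n, k.val = 1 := ⟨⟨1, by omega⟩, rfl⟩
  obtain ⟨i2, hi2⟩ : ∃ k : Fin n, k.val = 2 := ⟨⟨2, by omega⟩, rfl⟩
  set S : ℝ := ∑ j : Fin n, x j * w j with hSdef
  have hSpos : 0 < S := Finset.sum_pos (fun j _ => mul_pos (hx j) (hw j)) ⟨i0, Finset.mem_univ i0⟩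
  have heig' : ∀ i : Fin n, ∑ j : Fin n, simplePerturbed x δ i j * w j = lam * w i := by
    intro i
    have h := congrFun heig i
    simpa [Matrix.mulVec, dotProduct] using h
  -- equation for rows i with 2 ≤ i.val
  have hS2 : ∀ i : Fin n, 2 ≤ i.val → lam * (x i * w i) = S := by
    intro i hi
    have h := heig' i
    have hpt : ∀ j : Fin n, simplePerturbed x δ i j * w j = (x j * w j) / x i := by
      intro j
      rw [sp_gen x δ i j (by omega) (by omega)]
      ring
    rw [Finset.sum_congr rfl (fun j _ => hpt j), ← Finset.sum_div] at h
    rw [← hSdef, div_eq_iff (hx i).ne'] at h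
    linarith [h]
  -- equation for row i0
  have hS0 : lam * w i0 = S + (δ - 1) * (x i1 * w i1) := by
    have h := heig' i0
    have hpt : ∀ j : Fin n, simplePerturbed x δ i0 j * w j
        = x j * w j + (if j = i1 then (δ - 1) * (x i1 * w i1) else 0) := by
      intro j
      by_cases hj : j = i1
      · subst hj
        rw [sp_01 x δ i0 j hi0 hi1, if_pos rfl]
        ring
      · have hjv : ¬ j.val = 1 := fun hv => hj (Fin.ext (hv.trans hi1.symm))
        rw [sp_gen x δ i0 j (by omega) (by omega), hx0 i0 hi0, if_neg hj]
        ring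
    rw [Finset.sum_congr rfl (fun j _ => hpt j), Finset.sum_add_distrib,
      Finset.sum_ite_eq' Finset.univ i1, if_pos (Finset.mem_univ i1), ← hSdef] at h
    linarith [h]
  -- equation for row i1, multiplied by δ
  have hS1 : δ * (lam * (x i1 * w i1)) = δ * S - (δ - 1) * w i0 := by
    have h := heig' i1
    have hpt : ∀ j : Fin n, simplePerturbed x δ i1 j * w j
        = (x j * w j) / x i1 + (if j = i0 then (1 / (x i1 * δ) - 1 / x i1) * w i0 else 0) := by
      intro j
      by_cases hj : j = i0
      · subst hj
        rw [sp_10 x δ i1 j hi1 hi0, if_pos rfl, hx0 j hi0]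
        ring
      · have hjv : ¬ j.val = 0 := fun hv => hj (Fin.ext (hv.trans hi0.symm))
        rw [sp_gen x δ i1 j (by omega) (by omega), if_neg hj]
        ring
    rw [Finset.sum_congr rfl (fun j _ => hpt j), Finset.sum_add_distrib,
      Finset.sum_ite_eq' Finset.univ i0, if_pos (Finset.mem_univ i0),
      ← Finset.sum_div, ← hSdef] at h
    have hx1 : x i1 ≠ 0 := (hx i1).ne'
    have hδ0 : (0:ℝ) < δ := by positivity
    have key : S / x i1 + (1 / (x i1 * δ) - 1 / x i1) * w i0
        = (δ * S - (δ - 1) * w i0) / (δ * x i1) := by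
      field_simp
      ring
    rw [key, div_eq_iff (by positivity : (δ * x i1) ≠ 0)] at h
    linarith [h]
  have hupos : 0 < w i0 := hw i0
  have hvpos : 0 < x i1 * w i1 := mul_pos (hx i1) (hw i1)
  have hi01 : i0 ≠ i1 := fun h => by rw [h, hi1] at hi0; omega
  have hlampos : 0 < lam := by
    nlinarith [hS0, mul_pos (sub_pos.mpr hδ) hvpos]
  -- sum splitting: lam * S + 2 * S = lam * w i0 + lam * (x i1 * w i1) + n * S
  have hS3 : lam * S + 2 * S = lam * w i0 + lam * (x i1 * w i1) + (n : ℝ) * S := by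
    have hpt : ∀ j : Fin n, lam * (x j * w j)
        = ((if j = i0 then lam * w i0 - S else 0)
          + (if j = i1 then lam * (x i1 * w i1) - S else 0)) + S := by
      intro j
      by_cases hj0 : j = i0
      · subst hj0
        rw [if_pos rfl, if_neg hi01, hx0 j hi0]
        ring
      · by_cases hj1 : j = i1
        · subst hj1
          rw [if_neg hj0, if_pos rfl]
          ring
        · have hv0 : ¬ j.val = 0 := fun hv => hj0 (Fin.ext (hv.trans hi0.symm))
          have hv1 : ¬ j.val = 1 := fun hv => hj1 (Fin.ext (hv.trans hi1.symm))
          rw [if_neg hj0, if_neg hj1, hS2 j (by omega)]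
          ring
    have hsum : lam * S = ∑ j : Fin n, lam * (x j * w j) := by
      rw [hSdef, Finset.mul_sum]
    rw [Finset.sum_congr rfl (fun j _ => hpt j), Finset.sum_add_distrib,
      Finset.sum_add_distrib, Finset.sum_ite_eq' Finset.univ i0,
      Finset.sum_ite_eq' Finset.univ i1, if_pos (Finset.mem_univ i0),
      if_pos (Finset.mem_univ i1), Finset.sum_const, Finset.card_univ,
      Fintype.card_fin, nsmul_eq_mul] at hsum
    linarith [hsum]
  have hn3 : (3:ℝ) ≤ (n:ℝ) := by exact_mod_cast hn
  have hlam2 : 2 < lam := by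
    have hu : S < lam * w i0 := by nlinarith [mul_pos (sub_pos.mpr hδ) hvpos]
    have hv : 0 < lam * (x i1 * w i1) := mul_pos hlampos hvpos
    nlinarith [hS3, hu, hv, hSpos]
  -- the key inequality: w i0 < δ * (x i1 * w i1)
  have hK1 : w i0 < δ * (x i1 * w i1) := by
    by_contra hc
    push_neg at hc
    nlinarith [hS0, hS1, mul_nonneg hlampos.le (sub_nonneg.mpr hc),
      mul_nonneg (by linarith : (0:ℝ) ≤ δ - 1) (sub_nonneg.mpr hc),
      mul_pos (mul_pos (by linarith : (0:ℝ) < δ - 1) hupos)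
        (by linarith : (0:ℝ) < lam - 2)]
  -- key inequalities for rows/columns with index ≥ 2
  have hK2 : ∀ j : Fin n, 2 ≤ j.val → x j * w j < w i0 := by
    intro j hj
    have h1 : lam * (x j * w j) < lam * w i0 := by
      rw [hS2 j hj]
      nlinarith [mul_pos (sub_pos.mpr hδ) hvpos]
    exact lt_of_mul_lt_mul_left h1 hlampos.le
  have hK3 : ∀ j : Fin n, 2 ≤ j.val → x i1 * w i1 < x j * w j := by
    intro j hj
    have hδp : (0:ℝ) < δ := by positivity
    have h1 : δ * (lam * (x i1 * w i1)) < δ * (lam * (x j * w j)) := by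
      rw [hS2 j hj, hS1]
      nlinarith [mul_pos (by linarith : (0:ℝ) < δ - 1) hupos]
    have h2 := lt_of_mul_lt_mul_left h1 hδp.le
    exact lt_of_mul_lt_mul_left h2 hlampos.le
  have hK4 : ∀ i j : Fin n, 2 ≤ i.val → 2 ≤ j.val → x i * w i = x j * w j :=
    fun i j hi hj => mul_left_cancel₀ hlampos.ne' ((hS2 i hi).trans (hS2 j hj).symm)
  -- the four arc-structure claims
  have C1 : ∀ i j : Fin n, i.val = 1 → j.val = 0 → E i j ∧ ¬ E j i := by
    intro i j hiv hjv
    have hij : i1 = i := Fin.ext (hi1.trans hiv.symm)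
    have hji : i0 = j := Fin.ext (hi0.trans hjv.symm)
    subst hij; subst hji
    constructor
    · rw [hE]
      refine ⟨fun h => hi01 h.symm, ?_⟩
      rw [sp_10 x δ i1 i0 hi1 hi0, div_le_div_iff₀ (mul_pos (hx i1) (by positivity)) hupos]
      linarith [hK1]
    · rw [hE]
      rintro ⟨-, hle⟩
      rw [sp_01 x δ i0 i1 hi0 hi1, le_div_iff₀ (hw i1)] at hle
      linarith [hK1]
  have C2 : ∀ i j : Fin n, i.val = 0 → 2 ≤ j.val → E i j ∧ ¬ E j i := by
    intro i j hiv hjv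
    have hij : i0 = i := Fin.ext (hi0.trans hiv.symm)
    subst hij
    have hne : i0 ≠ j := fun h => by rw [← h, hi0] at hjv; omega
    have key := hK2 j hjv
    constructor
    · rw [hE]
      refine ⟨hne, ?_⟩
      rw [sp_gen x δ i0 j (by omega) (by omega), hx0 i0 hi0,
        div_le_div_iff₀ one_pos (hw j)]
      linarith [key]
    · rw [hE]
      rintro ⟨-, hle⟩
      rw [sp_gen x δ j i0 (by omega) (by omega), hx0 i0 hi0,
        div_le_div_iff₀ (hx j) hupos] at hle
      linarith [key]
  have C3 : ∀ i j : Fin n, 2 ≤ i.val → j.val = 1 → E i j ∧ ¬ E j i := by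
    intro i j hiv hjv
    have hij : i1 = j := Fin.ext (hi1.trans hjv.symm)
    subst hij
    have hne : i ≠ i1 := fun h => by rw [h, hi1] at hiv; omega
    have key := hK3 i hiv
    constructor
    · rw [hE]
      refine ⟨hne, ?_⟩
      rw [sp_gen x δ i i1 (by omega) (by omega), div_le_div_iff₀ (hx i) (hw i1)]
      linarith [key]
    · rw [hE]
      rintro ⟨-, hle⟩
      rw [sp_gen x δ i1 i (by omega) (by omega), div_le_div_iff₀ (hx i1) (hw i)] at hle
      linarith [key]
  have C4 : ∀ i j : Fin n, 2 ≤ i.val → 2 ≤ j.val → i ≠ j → E i j ∧ E j i := by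
    intro i j hiv hjv hne
    have key := hK4 i j hiv hjv
    constructor
    · rw [hE]
      refine ⟨hne, ?_⟩
      rw [sp_gen x δ i j (by omega) (by omega), div_le_div_iff₀ (hx i) (hw j)]
      linarith [key]
    · rw [hE]
      refine ⟨hne.symm, ?_⟩
      rw [sp_gen x δ j i (by omega) (by omega), div_le_div_iff₀ (hx j) (hw i)]
      linarith [key]
  refine ⟨C1, C2, C3, C4, ?_⟩
  -- strong connectivity
  intro u v huv
  by_cases hu0 : u.val = 0
  · by_cases hv0 : v.val = 0
    · exact absurd (Fin.ext (hu0.trans hv0.symm)) huv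
    · by_cases hv1 : v.val = 1
      · exact Relation.TransGen.head ((C2 u i2 hu0 (by omega)).1)
          (Relation.TransGen.single ((C3 i2 v (by omega) hv1).1))
      · exact Relation.TransGen.single ((C2 u v hu0 (by omega)).1)
  · by_cases hu1 : u.val = 1
    · by_cases hv0 : v.val = 0
      · exact Relation.TransGen.single ((C1 u v hu1 hv0).1)
      · by_cases hv1 : v.val = 1
        · exact absurd (Fin.ext (hu1.trans hv1.symm)) huv
        · exact Relation.TransGen.head ((C1 u i0 hu1 hi0).1)
            (Relation.TransGen.single ((C2 i0 v hi0 (by omega)).1))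
    · by_cases hv0 : v.val = 0
      · exact Relation.TransGen.head ((C3 u i1 (by omega) hi1).1)
          (Relation.TransGen.single ((C1 i1 v hi1 hv0).1))
      · by_cases hv1 : v.val = 1
        · exact Relation.TransGen.single ((C3 u v (by omega) hv1).1)
        · exact Relation.TransGen.single ((C4 u v (by omega) (by omega) huv).1)
end

section
/- The Perron eigenvector of a simple perturbed pairwise comparison matrix is efficient: there is no positive vector w' such that |a_{ij} − w'_i/w'_j| ≤ |a_{ij} − w_i/w_j| for all i,j with strict inequality for at least one pair, where w is the Perron eigenvector of A_δ. -/
lemma ratio_forcing {a b t s a' b' : ℝ} (ha : 0 < a) (hb : 0 < b) (ht : 0 < t)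
    (h1 : a' * t ≤ a * s) (h2 : b * s ≤ b' * t) (h3 : a * b' ≤ a' * b) :
    a' * t = a * s ∧ b' * t = b * s := by
  have k1 : a * s ≤ a' * t := by
    nlinarith only [hb, mul_le_mul_of_nonneg_left h2 ha.le, mul_le_mul_of_nonneg_right h3 ht.le]
  have e1 : a' * t = a * s := le_antisymm h1 k1
  have k2 : a * (b' * t) ≤ a * (b * s) := by
    nlinarith only [mul_le_mul_of_nonneg_right h3 ht.le,
      mul_le_mul_of_nonneg_right e1.le hb.le, mul_le_mul_of_nonneg_right e1.ge hb.le]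
  exact ⟨e1, le_antisymm (le_of_mul_le_mul_left k2 ha) h2⟩

set_option maxHeartbeats 1000000 in
/-- Main theorem: the Perron eigenvector of a simple perturbed
pairwise comparison matrix is efficient. -/
theorem perron_eigenvector_of_simple_perturbed_is_efficient {n : ℕ} (hn : 3 ≤ n)
    (x : Fin n → ℝ) (hx : ∀ i, 0 < x i) (hx0 : ∀ i : Fin n, i.val = 0 → x i = 1)
    (δ : ℝ) (hδ : 0 < δ) (hδ1 : δ ≠ 1)
    (lam : ℝ) (w : Fin n → ℝ)
    (hPerron : IsPerronEigenpair (simplePerturbed x δ) lam w) :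
    IsEfficient (simplePerturbed x δ) w := by
  obtain ⟨hw, heig⟩ := hPerron
  rintro ⟨w', hw', hle, k, l, hlt⟩
  have hδ0 : δ ≠ 0 := ne_of_gt hδ
  set A := simplePerturbed x δ with hAdef
  set i0 : Fin n := ⟨0, by omega⟩ with hi0
  set i1 : Fin n := ⟨1, by omega⟩ with hi1
  set i2 : Fin n := ⟨2, by omega⟩ with hi2
  have hxi0 : x i0 = 1 := hx0 i0 rfl
  have hi01 : i0 ≠ i1 := by simp [hi0, hi1, Fin.ext_iff]
  have hi02 : i0 ≠ i2 := by simp [hi0, hi2, Fin.ext_iff]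
  have hi12 : i1 ≠ i2 := by simp [hi1, hi2, Fin.ext_iff]
  -- entry lemmas
  have hE : ∀ i j : Fin n, i.val ≠ 0 → i.val ≠ 1 → A i j = x j / x i := by
    intro i j h0 h1
    simp only [hAdef, simplePerturbed]
    rw [if_neg (by omega), if_neg (by omega)]
  have hE01 : A i0 i1 = x i1 * δ := by
    simp [hAdef, hi0, hi1, simplePerturbed]
  have hE0 : ∀ j : Fin n, j ≠ i1 → A i0 j = x j := by
    intro j hj
    have hj1 : j.val ≠ 1 := fun h => hj (Fin.ext (by simp [hi1, h]))
    simp only [hAdef, simplePerturbed]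
    rw [if_neg (by simp [hi0]; omega), if_neg (by simp [hi0]), hxi0, div_one]
  have hE10 : A i1 i0 = 1 / (x i1 * δ) := by
    simp [hAdef, hi0, hi1, simplePerturbed]
  have hE1 : ∀ j : Fin n, j ≠ i0 → A i1 j = x j / x i1 := by
    intro j hj
    have hj0 : j.val ≠ 0 := fun h => hj (Fin.ext (by simp [hi0, h]))
    simp only [hAdef, simplePerturbed]
    rw [if_neg (by simp [hi1]), if_neg (by simp [hi1]; omega)]
  -- eigen equations
  have hmul : ∀ i, ∑ j, A i j * w j = lam * w i := by
    intro i
    simpa [Matrix.mulVec, dotProduct] using congrFun heig i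
  set S : ℝ := ∑ j, x j * w j with hSdef
  have hS : 0 < S := Finset.sum_pos (fun j _ => mul_pos (hx j) (hw j)) ⟨i0, Finset.mem_univ _⟩
  -- generic rows
  have hrow : ∀ i : Fin n, i.val ≠ 0 → i.val ≠ 1 → lam * (x i * w i) = S := by
    intro i h0 h1
    have h2 : ∑ j, A i j * w j = S / x i := by
      rw [Finset.sum_congr rfl (fun j _ => by rw [hE i j h0 h1]; ring :
        ∀ j ∈ Finset.univ, A i j * w j = (x j * w j) / x i), ← Finset.sum_div]
    rw [hmul i, eq_div_iff (hx i).ne'] at h2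
    linear_combination h2
  have hi2v0 : (i2 : Fin n).val ≠ 0 := by simp [hi2]
  have hi2v1 : (i2 : Fin n).val ≠ 1 := by simp [hi2]
  have hxw2 : lam * (x i2 * w i2) = S := hrow i2 hi2v0 hi2v1
  have hlam : 0 < lam := by
    by_contra hcon
    push_neg at hcon
    nlinarith only [hcon, hxw2, hS, mul_pos (hx i2) (hw i2)]
  -- row 0
  have hrow0 : lam * w i0 = S + (δ - 1) * (x i1 * w i1) := by
    have hterm : ∀ j : Fin n, A i0 j * w j
        = x j * w j + (if j = i1 then (δ - 1) * (x i1 * w i1) else 0) := by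
      intro j
      by_cases hj : j = i1
      · subst hj; rw [hE01, if_pos rfl]; ring
      · rw [hE0 j hj, if_neg hj]; ring
    have h2 : ∑ j, A i0 j * w j = S + (δ - 1) * (x i1 * w i1) := by
      rw [Finset.sum_congr rfl (fun j _ => hterm j), Finset.sum_add_distrib,
        Finset.sum_ite_eq' Finset.univ i1, if_pos (Finset.mem_univ _)]
    rw [hmul i0] at h2; exact h2
  -- row 1 (multiplied through by δ to avoid fractions)
  have hrow1 : lam * (δ * (x i1 * w i1)) = δ * S + (1 - δ) * w i0 := by
    have hterm : ∀ j : Fin n, (δ * x i1) * (A i1 j * w j)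
        = δ * (x j * w j) + (if j = i0 then (1 - δ) * w i0 else 0) := by
      intro j
      by_cases hj : j = i0
      · subst hj
        rw [hE10, if_pos rfl, hxi0]
        field_simp [hδ0, (hx i1).ne']
        ring
      · rw [hE1 j hj, if_neg hj]
        field_simp [(hx i1).ne']
        ring
    have h2 : ∑ j, (δ * x i1) * (A i1 j * w j) = δ * S + (1 - δ) * w i0 := by
      rw [Finset.sum_congr rfl (fun j _ => hterm j), Finset.sum_add_distrib,
        Finset.sum_ite_eq' Finset.univ i0, if_pos (Finset.mem_univ _), ← Finset.mul_sum]
    rw [← Finset.mul_sum, hmul i1] at h2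
    linear_combination h2
  -- abbreviations
  set a : ℝ := w i0 with hadef
  set b : ℝ := x i1 * w i1 with hbdef
  set t : ℝ := x i2 * w i2 with htdef
  have ha : 0 < a := hw i0
  have hb : 0 < b := mul_pos (hx i1) (hw i1)
  have ht : 0 < t := mul_pos (hx i2) (hw i2)
  have hlamt : lam * t = S := hxw2
  -- a + b < S
  have habS : a + b < S := by
    have hsum3 : ∑ j ∈ ({i0, i1, i2} : Finset (Fin n)), x j * w j
        = x i0 * w i0 + (x i1 * w i1 + x i2 * w i2) := by
      rw [Finset.sum_insert (by simp [hi01, hi02]), Finset.sum_insert (by simp [hi12]),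
        Finset.sum_singleton]
    have hle3 : ∑ j ∈ ({i0, i1, i2} : Finset (Fin n)), x j * w j ≤ S :=
      Finset.sum_le_sum_of_subset_of_nonneg (Finset.subset_univ _)
        (fun j _ _ => le_of_lt (mul_pos (hx j) (hw j)))
    rw [hsum3, hxi0] at hle3
    nlinarith only [hle3, mul_pos (hx i2) (hw i2), hadef, hbdef, htdef]
  -- structural facts about w
  have hF1 : ∀ i : Fin n, i.val ≠ 0 → i.val ≠ 1 → x i * w i = t := by
    intro i h0 h1
    have h := hrow i h0 h1
    nlinarith only [h, hlamt, hlam]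
  -- structural facts about w'
  set s : ℝ := x i2 * w' i2 with hsdef
  have hs : 0 < s := mul_pos (hx i2) (hw' i2)
  have hwi2 : w i2 = t / x i2 := by
    rw [htdef, mul_comm, mul_div_assoc, div_self (hx i2).ne', mul_one]
  have hwi2' : w' i2 = s / x i2 := by
    rw [hsdef, mul_comm, mul_div_assoc, div_self (hx i2).ne', mul_one]
  have hstepA : ∀ i : Fin n, i.val ≠ 0 → i.val ≠ 1 → x i * w' i = s := by
    intro i h0 h1
    by_cases hik : i = i2
    · rw [hik]
    · have hAi : A i i2 = x i2 / x i := hE i i2 h0 h1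
      have hwi : w i = t / x i := by
        rw [← hF1 i h0 h1, mul_comm, mul_div_assoc, div_self (hx i).ne', mul_one]
      have hq : t / x i / (t / x i2) = x i2 / x i := by
        rw [div_div_div_comm, div_self ht.ne', div_div_eq_mul_div, one_mul]
      have hzero : |A i i2 - w i / w i2| = 0 := by
        rw [hAi, hwi, hwi2, hq, sub_self, abs_zero]
      have hlei := hle i i2
      rw [hzero] at hlei
      have h0' : A i i2 - w' i / w' i2 = 0 :=
        abs_eq_zero.mp (le_antisymm hlei (abs_nonneg _))
      rw [hAi, hwi2', sub_eq_zero, div_div_eq_mul_div,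
        div_eq_div_iff (hx i).ne' hs.ne'] at h0'
      exact mul_left_cancel₀ (hx i2).ne' (by linear_combination -h0')
  set a' : ℝ := w' i0 with hadef'
  set b' : ℝ := x i1 * w' i1 with hbdef'
  have ha' : 0 < a' := hw' i0
  have hb' : 0 < b' := mul_pos (hx i1) (hw' i1)
  -- ratio formulas
  have hwi1 : w i1 = b / x i1 := by
    rw [hbdef, mul_comm, mul_div_assoc, div_self (hx i1).ne', mul_one]
  have hwi1' : w' i1 = b' / x i1 := by
    rw [hbdef', mul_comm, mul_div_assoc, div_self (hx i1).ne', mul_one]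
  have r02 : w i0 / w i2 = a * x i2 / t := by
    rw [hwi2, div_div_eq_mul_div]
  have r02' : w' i0 / w' i2 = a' * x i2 / s := by
    rw [hwi2', div_div_eq_mul_div]
  have r12 : w i1 / w i2 = b * x i2 / (x i1 * t) := by
    rw [hwi1, hwi2]; field_simp [(hx i1).ne', (hx i2).ne', ht.ne', hb.ne']
  have r12' : w' i1 / w' i2 = b' * x i2 / (x i1 * s) := by
    rw [hwi1', hwi2']; field_simp [(hx i1).ne', (hx i2).ne', hs.ne', hb'.ne']
  have r01 : w i0 / w i1 = a * x i1 / b := by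
    rw [hwi1, div_div_eq_mul_div]
  have r01' : w' i0 / w' i1 = a' * x i1 / b' := by
    rw [hwi1', div_div_eq_mul_div]
  -- the three comparison inequalities
  have hle02 := hle i0 i2
  have hle12 := hle i1 i2
  have hle01 := hle i0 i1
  rw [hE0 i2 (Ne.symm hi12), r02, r02'] at hle02
  rw [hE1 i2 (Ne.symm hi02), r12, r12'] at hle12
  rw [hE01, r01, r01'] at hle01
  have hx1 := hx i1
  have hx2 := hx i2
  have hid1 : lam * (a - t) = (δ - 1) * b := by linear_combination hrow0 - hlamt
  have hid2 : lam * δ * (b - t) = (1 - δ) * a := by linear_combination hrow1 - δ * hlamt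
  have hid3 : lam * (δ * b - a) = (δ - 1) * (S - a - b) := by
    linear_combination hrow1 - hrow0
  have key : a' * t = a * s ∧ b' * t = b * s := by
    rcases lt_or_gt_of_ne hδ1 with hcase | hcase
    · -- δ < 1 : a < t, t < b, δ*b < a
      have hta : a < t := by nlinarith only [hid1, mul_pos (sub_pos.mpr hcase) hb, hlam]
      have hbt : t < b := by nlinarith only [hid2, mul_pos hlam hδ, mul_pos (sub_pos.mpr hcase) ha]
      have hab : δ * b < a := by
        nlinarith only [hid3, mul_pos (sub_pos.mpr hcase) (sub_pos.mpr habS), hlam]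
      have h1 : a * s ≤ a' * t := by
        have hZ : 0 ≤ x i2 - a * x i2 / t := by
          rw [sub_nonneg, div_le_iff₀ ht]
          nlinarith only [hta, hx2]
        have hX : a * x i2 / t ≤ a' * x i2 / s := by
          have h5 : x i2 - a' * x i2 / s ≤ x i2 - a * x i2 / t :=
            le_trans (le_abs_self _) (hle02.trans_eq (abs_of_nonneg hZ))
          linarith only [h5]
        rw [div_le_div_iff₀ ht hs] at hX
        nlinarith only [hX, hx2]
      have h2 : b' * t ≤ b * s := by
        have hZ : x i2 / x i1 - b * x i2 / (x i1 * t) ≤ 0 := by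
          rw [sub_nonpos, div_le_div_iff₀ hx1 (mul_pos hx1 ht)]
          nlinarith only [hbt, mul_pos hx1 hx2, hx1, hx2]
        have hX : b' * x i2 / (x i1 * s) ≤ b * x i2 / (x i1 * t) := by
          have h5 := neg_abs_le (x i2 / x i1 - b' * x i2 / (x i1 * s))
          rw [abs_of_nonpos hZ] at hle12
          linarith only [h5, hle12]
        rw [div_le_div_iff₀ (mul_pos hx1 hs) (mul_pos hx1 ht)] at hX
        nlinarith only [hX, mul_pos hx1 hx2]
      have h3 : a' * b ≤ a * b' := by
        have hZ : x i1 * δ - a * x i1 / b ≤ 0 := by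
          rw [sub_nonpos, le_div_iff₀ hb]
          nlinarith only [hab, hx1]
        have hX : a' * x i1 / b' ≤ a * x i1 / b := by
          have h5 := neg_abs_le (x i1 * δ - a' * x i1 / b')
          rw [abs_of_nonpos hZ] at hle01
          linarith only [h5, hle01]
        rw [div_le_div_iff₀ hb' hb] at hX
        nlinarith only [hX, hx1]
      obtain ⟨e1, e2⟩ := ratio_forcing ha' hb' hs h1 h2 h3
      exact ⟨e1.symm, e2.symm⟩
    · -- δ > 1 : t < a, b < t, a < δ*b
      have hta : t < a := by nlinarith only [hid1, mul_pos (sub_pos.mpr hcase) hb, hlam]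
      have hbt : b < t := by nlinarith only [hid2, mul_pos hlam hδ, mul_pos (sub_pos.mpr hcase) ha]
      have hab : a < δ * b := by
        nlinarith only [hid3, mul_pos (sub_pos.mpr hcase) (sub_pos.mpr habS), hlam]
      have h1 : a' * t ≤ a * s := by
        have hZ : x i2 - a * x i2 / t ≤ 0 := by
          rw [sub_nonpos, le_div_iff₀ ht]
          nlinarith only [hta, hx2]
        have hX : a' * x i2 / s ≤ a * x i2 / t := by
          have h5 := neg_abs_le (x i2 - a' * x i2 / s)
          rw [abs_of_nonpos hZ] at hle02
          linarith only [h5, hle02]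
        rw [div_le_div_iff₀ hs ht] at hX
        nlinarith only [hX, hx2]
      have h2 : b * s ≤ b' * t := by
        have hZ : 0 ≤ x i2 / x i1 - b * x i2 / (x i1 * t) := by
          rw [sub_nonneg, div_le_div_iff₀ (mul_pos hx1 ht) hx1]
          nlinarith only [hbt, mul_pos hx1 hx2, hx1, hx2]
        have hX : b * x i2 / (x i1 * t) ≤ b' * x i2 / (x i1 * s) := by
          have h5 : x i2 / x i1 - b' * x i2 / (x i1 * s) ≤ x i2 / x i1 - b * x i2 / (x i1 * t) :=
            le_trans (le_abs_self _) (hle12.trans_eq (abs_of_nonneg hZ))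
          linarith only [h5]
        rw [div_le_div_iff₀ (mul_pos hx1 ht) (mul_pos hx1 hs)] at hX
        nlinarith only [hX, mul_pos hx1 hx2]
      have h3 : a * b' ≤ a' * b := by
        have hZ : 0 ≤ x i1 * δ - a * x i1 / b := by
          rw [sub_nonneg, div_le_iff₀ hb]
          nlinarith only [hab, hx1]
        have hX : a * x i1 / b ≤ a' * x i1 / b' := by
          have h5 : x i1 * δ - a' * x i1 / b' ≤ x i1 * δ - a * x i1 / b :=
            le_trans (le_abs_self _) (hle01.trans_eq (abs_of_nonneg hZ))
          linarith only [h5]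
        rw [div_le_div_iff₀ hb hb'] at hX
        nlinarith only [hX, hx1]
      exact ratio_forcing ha hb ht h1 h2 h3
  -- conclude proportionality
  have hprop : ∀ i : Fin n, w' i * t = w i * s := by
    intro i
    by_cases hv0 : i.val = 0
    · have hii : i = i0 := Fin.ext (by simp [hi0, hv0])
      rw [hii]; exact key.1
    by_cases hv1 : i.val = 1
    · have hii : i = i1 := Fin.ext (by simp [hi1, hv1])
      rw [hii]
      exact mul_left_cancel₀ (hx i1).ne' (by linear_combination key.2)
    · have e1 := hstepA i hv0 hv1
      have e2 := hF1 i hv0 hv1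
      exact mul_left_cancel₀ (hx i).ne' (by linear_combination t * e1 - s * e2)
  have hratio : ∀ p q : Fin n, w' p / w' q = w p / w q := by
    intro p q
    have hp := hprop p
    have hq := hprop q
    rw [div_eq_div_iff (hw' q).ne' (hw q).ne']
    exact mul_left_cancel₀ ht.ne' (by linear_combination w q * hp - w p * hq)
  rw [hratio k l] at hlt
  exact lt_irrefl _ hlt
end

section
/- The Perron (principal right) eigenvector of every 3×3 pairwise comparison matrix is efficient. -/
private lemma two_le_add_inv {x : ℝ} (hx : 0 < x) : 2 ≤ x + 1/x := by
  have h : x + 1/x - 2 = (x-1)^2/x := by field_simp; ring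
  have h2 : 0 ≤ (x-1)^2/x := by positivity
  linarith

private lemma lam_ge_three (a b c w0 w1 w2 lam : ℝ) (ha : 0 < a) (hb : 0 < b) (hc : 0 < c)
    (h0 : 0 < w0) (h1 : 0 < w1) (h2 : 0 < w2)
    (R0 : w0 + a*w1 + b*w2 = lam*w0)
    (R1 : (1/a)*w0 + w1 + c*w2 = lam*w1)
    (R2 : (1/b)*w0 + (1/c)*w1 + w2 = lam*w2) : 3 ≤ lam := by
  have r0 : lam = 1 + a*w1/w0 + b*w2/w0 := by
    field_simp
    linarith [R0]
  have r1 : lam = w0/(a*w1) + 1 + c*w2/w1 := by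
    field_simp at R1 ⊢
    linear_combination (-1) * R1
  have r2 : lam = w0/(b*w2) + w1/(c*w2) + 1 := by
    field_simp at R2 ⊢
    linear_combination (-1) * R2
  have i1 : 2 ≤ a*w1/w0 + w0/(a*w1) := by
    have hx : 0 < a*w1/w0 := by positivity
    have h := two_le_add_inv hx
    rwa [one_div_div] at h
  have i2 : 2 ≤ b*w2/w0 + w0/(b*w2) := by
    have hx : 0 < b*w2/w0 := by positivity
    have h := two_le_add_inv hx
    rwa [one_div_div] at h
  have i3 : 2 ≤ c*w2/w1 + w1/(c*w2) := by
    have hx : 0 < c*w2/w1 := by positivity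
    have h := two_le_add_inv hx
    rwa [one_div_div] at h
  linarith

private lemma arith_A {p q wi lam : ℝ} (hwi : 0 < wi) (h1 : p < wi) (h2 : q < wi)
    (e : wi + p + q = lam * wi) (hlam : 3 ≤ lam) : False := by
  nlinarith

private lemma arith_B {a p q wi wj lam : ℝ} (hwi : 0 < wi) (hwj : 0 < wj) (ha : 0 < a)
    (h1 : p < wi) (h2 : q < wj)
    (e1 : wi + a*wj + p = lam*wi) (e2 : (1/a)*wi + wj + q = lam*wj)
    (hlam : 3 ≤ lam) : False := by
  have h3 : (lam-2)*wi < a*wj := by nlinarith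
  field_simp at e2
  have h4 : a*((lam-2)*wj) < wi := by
    nlinarith [mul_lt_mul_of_pos_left h2 ha, e2]
  have hl2 : (0:ℝ) < lam - 2 := by linarith
  have h5 := mul_lt_mul_of_pos_left h3 hl2
  have hsq : 1 ≤ (lam-2)*(lam-2) := by nlinarith
  have h6 : wi ≤ (lam-2)*((lam-2)*wi) := by nlinarith [mul_le_mul_of_nonneg_right hsq hwi.le]
  linarith [h5, h4, h6]

private theorem perron_aux
    (A : Matrix (Fin 3) (Fin 3) ℝ) (hpos : ∀ i j, 0 < A i j) (hrec : ∀ i j, A j i = 1 / A i j)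
    (lam : ℝ) (w : Fin 3 → ℝ) (hw : ∀ i, 0 < w i) (heig : A.mulVec w = lam • w) :
    ¬ ∃ w' : Fin 3 → ℝ, (∀ i, 0 < w' i) ∧
      (∀ i j, |A i j - w' i / w' j| ≤ |A i j - w i / w j|) ∧
      (∃ k l, |A k l - w' k / w' l| < |A k l - w k / w l|) := by
  rintro ⟨w', hw', hdom, k, l, hstrict⟩
  have hdiag : ∀ i : Fin 3, A i i = 1 := by
    intro i
    have h := hrec i i
    have hp := hpos i i
    rw [eq_div_iff hp.ne'] at h
    rcases mul_self_eq_one_iff.mp h with h1 | h1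
    · exact h1
    · linarith
  have row : ∀ i : Fin 3, A i 0 * w 0 + A i 1 * w 1 + A i 2 * w 2 = lam * w i := by
    intro i
    have h := congrFun heig i
    simpa [Matrix.mulVec, dotProduct, Fin.sum_univ_three] using h
  have R0 : w 0 + A 0 1 * w 1 + A 0 2 * w 2 = lam * w 0 := by
    have h := row 0; rwa [hdiag 0, one_mul] at h
  have R1 : (1/(A 0 1)) * w 0 + w 1 + A 1 2 * w 2 = lam * w 1 := by
    have h := row 1; rwa [hrec 0 1, hdiag 1, one_mul] at h
  have R2 : (1/(A 0 2)) * w 0 + (1/(A 1 2)) * w 1 + w 2 = lam * w 2 := by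
    have h := row 2; rwa [hrec 0 2, hrec 1 2, hdiag 2, one_mul] at h
  have hlam : 3 ≤ lam :=
    lam_ge_three (A 0 1) (A 0 2) (A 1 2) (w 0) (w 1) (w 2) lam
      (hpos 0 1) (hpos 0 2) (hpos 1 2) (hw 0) (hw 1) (hw 2) R0 R1 R2
  -- key efficiency step
  have key : ∀ i j : Fin 3, w' i / w i < w' j / w j → A i j * w j < w i := by
    intro i j hs
    by_contra hcon
    push_neg at hcon
    have hrij : w i / w j ≤ A i j := (div_le_iff₀ (hw j)).mpr hcon
    have hd := hdom i j
    rw [abs_of_nonneg (by linarith : (0:ℝ) ≤ A i j - w i / w j)] at hd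
    have h2 : w i / w j ≤ w' i / w' j := by
      linarith [le_abs_self (A i j - w' i / w' j)]
    have h3 := (div_le_div_iff₀ (hw j) (hw' j)).mp h2
    have h4 := (div_lt_div_iff₀ (hw i) (hw j)).mp hs
    nlinarith
  have K01 := key 0 1
  have K02 := key 0 2
  have K12 := key 1 2
  have K10 : w' 1 / w 1 < w' 0 / w 0 → (1/(A 0 1)) * w 0 < w 1 := fun h => by
    have h' := key 1 0 h; rwa [hrec 0 1] at h'
  have K20 : w' 2 / w 2 < w' 0 / w 0 → (1/(A 0 2)) * w 0 < w 2 := fun h => by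
    have h' := key 2 0 h; rwa [hrec 0 2] at h'
  have K21 : w' 2 / w 2 < w' 1 / w 1 → (1/(A 1 2)) * w 1 < w 2 := fun h => by
    have h' := key 2 1 h; rwa [hrec 1 2] at h'
  -- not all ratios equal
  have hSkl : w' k / w k ≠ w' l / w l := by
    intro h
    have h' : w' k * w l = w' l * w k := (div_eq_div_iff (hw k).ne' (hw l).ne').mp h
    have hkl : w' k / w' l = w k / w l := by
      rw [div_eq_div_iff (hw' l).ne' (hw l).ne']; linarith
    rw [hkl] at hstrict
    exact lt_irrefl _ hstrict
  have hne : ¬ (w' 0 / w 0 = w' 1 / w 1 ∧ w' 0 / w 0 = w' 2 / w 2) := by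
    rintro ⟨h01, h02⟩
    apply hSkl
    have hall : ∀ i : Fin 3, w' i / w i = w' 0 / w 0 := by
      intro i; fin_cases i
      · rfl
      · exact h01.symm
      · exact h02.symm
    rw [hall k, hall l]
  rcases lt_trichotomy (w' 0 / w 0) (w' 1 / w 1) with h1 | h1 | h1
  · rcases lt_trichotomy (w' 1 / w 1) (w' 2 / w 2) with h2 | h2 | h2
    · exact arith_B (lam := lam) (hw 0) (hw 1) (hpos 0 1)
        (K02 (h1.trans h2)) (K12 h2) (by linarith [R0]) (by linarith [R1]) hlam
    · exact arith_A (lam := lam) (hw 0) (K01 h1) (K02 (lt_of_lt_of_le h1 h2.le))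
        (by linarith [R0]) hlam
    · exact arith_B (lam := lam) (hw 0) (hw 2) (hpos 0 2)
        (K01 h1) (K21 h2) (by linarith [R0]) (by linarith [R2]) hlam
  · have h02 : w' 0 / w 0 ≠ w' 2 / w 2 := fun h => hne ⟨h1, h⟩
    rcases h02.lt_or_gt with h2 | h2
    · exact arith_B (lam := lam) (hw 0) (hw 1) (hpos 0 1)
        (K02 h2) (K12 (lt_of_le_of_lt h1.ge h2)) (by linarith [R0]) (by linarith [R1]) hlam
    · exact arith_A (lam := lam) (hw 2) (K20 h2) (K21 (lt_of_lt_of_le h2 h1.le))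
        (by linarith [R2]) hlam
  · rcases lt_trichotomy (w' 2 / w 2) (w' 0 / w 0) with h2 | h2 | h2
    · exact arith_B (lam := lam) (hw 1) (hw 2) (hpos 1 2)
        (K10 h1) (K20 h2) (by linarith [R1]) (by linarith [R2]) hlam
    · exact arith_A (lam := lam) (hw 1) (K10 h1) (K12 (lt_of_lt_of_le h1 h2.ge))
        (by linarith [R1]) hlam
    · exact arith_A (lam := lam) (hw 1) (K10 h1) (K12 (h1.trans h2))
        (by linarith [R1]) hlam

/-- the Perron eigenvector of every 3×3 PCM is efficient. -/
theorem perron_eigenvector_three_by_three_is_efficient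
    (A : Matrix (Fin 3) (Fin 3) ℝ) (hA : IsPCM A)
    (lam : ℝ) (w : Fin 3 → ℝ) (hPerron : IsPerronEigenpair A lam w) :
    IsEfficient A w := by
  obtain ⟨hpos, hrec⟩ := hA
  obtain ⟨hw, heig⟩ := hPerron
  exact perron_aux A hpos hrec lam w hw heig
end
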